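/- Let F(x,ξ) be the multi-product newsvendor cost with parameters satisfying v > g, b ≥ 0, b ≥ v−g componentwise. For any x, the function ξ ↦ F(x,ξ) is Lipschitz on ℝ₊^d with constant ‖b‖₂ with respect to the ℓ₂-norm; consequently, by Kantorovich–Rubinstein duality, the supremum of 𝔼_ℚ[F(x,ξ)] over all ℚ with W₁(ℚ, 𝔓̂ₙ) ≤ ε (ℓ₂ ground cost) equals (1/n)∑ⱼ F(x,ξ̂ⱼ) + ε‖b‖₂, so the 1-Wasserstein DRO problem has the same minimizers in x as the SAA problem. -/

import Mathlib

open MeasureTheory ENNReal Finset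

/-- Optimal transport cost between two measures (1-Wasserstein when the cost is a metric). -/
noncomputable def Wcost {E : Type*} [MeasurableSpace E] (c : E → E → ℝ)
    (μ ν : Measure E) : ℝ≥0∞ :=
  ⨅ (π : Measure (E × E)) (_ : π.map Prod.fst = μ) (_ : π.map Prod.snd = ν),
    ∫⁻ z, ENNReal.ofReal (c z.1 z.2) ∂π

/-- The empirical measure of a finite sample. -/
noncomputable def empMeasure {E : Type*} [MeasurableSpace E] {n : ℕ}
    (ξ : Fin n → E) : Measure E :=
  ((n : ℝ≥0∞))⁻¹ • ∑ i, Measure.dirac (ξ i)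

/-- Euclidean norm of a vector in `ℝᵈ`. -/
noncomputable def enorm2 {d : ℕ} (φ : Fin d → ℝ) : ℝ := Real.sqrt (∑ i, (φ i) ^ 2)

/-- The 1-Wasserstein DRO objective for the newsvendor problem: worst-case expected cost
over measures supported on `ℝ₊ᵈ` in the `W₁`-ball of radius `ε` around the empirical
measure (Euclidean ground cost). -/
noncomputable def droObj {d n : ℕ} (F : (Fin d → ℝ) → (Fin d → ℝ) → ℝ)
    (ξhat : Fin n → (Fin d → ℝ)) (ε : ℝ) (x : Fin d → ℝ) : ℝ :=
  sSup {r : ℝ | ∃ Q : Measure (Fin d → ℝ), IsProbabilityMeasure Q ∧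
    Q {ξ | ∀ i, 0 ≤ ξ i}ᶜ = 0 ∧
    Wcost (fun a b => enorm2 (fun i => a i - b i)) Q (empMeasure ξhat) ≤ ENNReal.ofReal ε ∧
    r = ∫ ξ, F x ξ ∂Q}

/-! ### Auxiliary lemmas -/

lemma NV.scalar_key (bi vg x s t : ℝ) (hb : 0 ≤ bi) (hvg : 0 < vg) (hle : vg ≤ bi) :
    |bi * (s - t) + (-vg - bi) * (min x s - min x t)| ≤ bi * |s - t| := by
  rcases le_total x s with h1 | h1 <;> rcases le_total x t with h2 | h2 <;>
    rcases le_total s t with h3 | h3 <;>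
    simp only [min_eq_left, min_eq_right, h1, h2] <;>
    rw [abs_le] <;> constructor <;>
    rcases abs_cases (s - t) with ⟨he, _⟩ | ⟨he, _⟩ <;> nlinarith

lemma NV.enorm2_nonneg {d : ℕ} (φ : Fin d → ℝ) : 0 ≤ enorm2 φ := Real.sqrt_nonneg _

lemma NV.continuous_enorm2 {d : ℕ} : Continuous (enorm2 (d := d)) :=
  Real.continuous_sqrt.comp (continuous_finset_sum _ fun i _ => (continuous_apply i).pow 2)

lemma NV.lipF {d : ℕ} (c v g b : Fin d → ℝ)
    (hvg : ∀ i, g i < v i) (hb : ∀ i, 0 ≤ b i) (hbvg : ∀ i, v i - g i ≤ b i)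
    (F : (Fin d → ℝ) → (Fin d → ℝ) → ℝ)
    (hF : ∀ x ξ, F x ξ = (∑ i, (c i - g i) * x i) + (∑ i, b i * ξ i) +
        ∑ i, (g i - v i - b i) * min (x i) (ξ i))
    (x ξ₁ ξ₂ : Fin d → ℝ) :
    |F x ξ₁ - F x ξ₂| ≤ enorm2 b * enorm2 (fun i => ξ₁ i - ξ₂ i) := by
  have hdiff : F x ξ₁ - F x ξ₂ =
      ∑ i, (b i * (ξ₁ i - ξ₂ i) +
        (-(v i - g i) - b i) * (min (x i) (ξ₁ i) - min (x i) (ξ₂ i))) := by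
    have expand : ∀ i, b i * (ξ₁ i - ξ₂ i) +
        (-(v i - g i) - b i) * (min (x i) (ξ₁ i) - min (x i) (ξ₂ i)) =
        (b i * ξ₁ i + (g i - v i - b i) * min (x i) (ξ₁ i)) -
        (b i * ξ₂ i + (g i - v i - b i) * min (x i) (ξ₂ i)) := fun i => by ring
    rw [hF, hF]
    simp only [expand, Finset.sum_sub_distrib, Finset.sum_add_distrib]
    ring
  rw [hdiff]
  calc |∑ i, (b i * (ξ₁ i - ξ₂ i) +
        (-(v i - g i) - b i) * (min (x i) (ξ₁ i) - min (x i) (ξ₂ i)))|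
      ≤ ∑ i, |b i * (ξ₁ i - ξ₂ i) +
        (-(v i - g i) - b i) * (min (x i) (ξ₁ i) - min (x i) (ξ₂ i))| :=
        Finset.abs_sum_le_sum_abs _ _
    _ ≤ ∑ i, b i * |ξ₁ i - ξ₂ i| := by
        apply Finset.sum_le_sum; intro i _
        exact NV.scalar_key (b i) (v i - g i) (x i) (ξ₁ i) (ξ₂ i) (hb i)
          (by linarith [hvg i]) (hbvg i)
    _ ≤ enorm2 b * enorm2 (fun i => ξ₁ i - ξ₂ i) := by
        have := Real.sum_mul_le_sqrt_mul_sqrt Finset.univ b (fun i => |ξ₁ i - ξ₂ i|)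
        simp only [sq_abs] at this
        exact this

section Meas
variable {E : Type*} [MeasurableSpace E] {n : ℕ} (ξ : Fin n → E)

lemma NV.lintegral_empMeasure (f : E → ℝ≥0∞) (hf : Measurable f) :
    ∫⁻ a, f a ∂(empMeasure ξ) = (n : ℝ≥0∞)⁻¹ * ∑ j, f (ξ j) := by
  rw [empMeasure, lintegral_smul_measure, lintegral_finset_sum_measure]
  simp [lintegral_dirac' _ hf]

lemma NV.integrable_dirac' (f : E → ℝ) (hf : Measurable f) (a : E) :
    Integrable f (Measure.dirac a) := by
  refine ⟨hf.stronglyMeasurable.aestronglyMeasurable, ?_⟩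
  rw [HasFiniteIntegral, lintegral_dirac' _ (by measurability)]
  exact coe_lt_top

lemma NV.integrable_empMeasure (f : E → ℝ) (hf : Measurable f) :
    Integrable f (empMeasure ξ) := by
  rw [empMeasure]
  rcases Nat.eq_zero_or_pos n with h | h
  · subst h; simp
  · exact (integrable_finset_sum_measure.2 fun j _ => NV.integrable_dirac' f hf (ξ j)).smul_measure
      (by simp [h.ne'])

lemma NV.integral_empMeasure (hn : 0 < n) (f : E → ℝ) (hf : Measurable f) :
    ∫ a, f a ∂(empMeasure ξ) = (∑ j, f (ξ j)) / n := by
  rw [empMeasure, integral_smul_measure, integral_finset_sum_measure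
    (fun j _ => NV.integrable_dirac' f hf (ξ j))]
  simp only [integral_dirac' _ _ hf.stronglyMeasurable]
  rw [ENNReal.toReal_inv]
  simp [div_eq_inv_mul]

lemma NV.isProb_empMeasure (hn : 0 < n) : IsProbabilityMeasure (empMeasure ξ) := by
  constructor
  rw [empMeasure]
  simp [Measure.smul_apply, Measure.coe_finset_sum, Finset.sum_apply]
  rw [ENNReal.inv_mul_cancel (by exact_mod_cast hn.ne') (by simp)]

lemma NV.empMeasure_compl_eq_zero {S : Set E} (hS : MeasurableSet S) (h : ∀ j, ξ j ∈ S) :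
    empMeasure ξ Sᶜ = 0 := by
  rw [empMeasure]
  simp only [Measure.smul_apply, Measure.coe_finset_sum, Finset.sum_apply, smul_eq_mul]
  have : ∀ j, Measure.dirac (ξ j) Sᶜ = 0 := fun j => by
    rw [Measure.dirac_apply' _ hS.compl]
    simp [Set.indicator_of_notMem, h j]
  simp [this]

lemma NV.map_empMeasure {E' : Type*} [MeasurableSpace E'] (f : E → E') (hf : Measurable f) :
    (empMeasure ξ).map f = empMeasure (f ∘ ξ) := by
  rw [empMeasure, empMeasure, Measure.map_smul]
  congr 1
  classical
  induction (Finset.univ : Finset (Fin n)) using Finset.induction_on with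
  | empty => simp
  | insert _ _ hnotmem ih =>
      rw [Finset.sum_insert hnotmem, Finset.sum_insert hnotmem, Measure.map_add _ _ hf,
        Measure.map_dirac' hf, ih]
      rfl

end Meas

lemma NV.Wcost_le {E : Type*} [MeasurableSpace E] (c : E → E → ℝ) (μ ν : Measure E)
    (π : Measure (E × E)) (h1 : π.map Prod.fst = μ) (h2 : π.map Prod.snd = ν) :
    Wcost c μ ν ≤ ∫⁻ z, ENNReal.ofReal (c z.1 z.2) ∂π := by
  exact iInf_le_of_le π (iInf_le_of_le h1 (iInf_le_of_le h2 le_rfl))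

lemma NV.upper {d : ℕ} (F : (Fin d → ℝ) → (Fin d → ℝ) → ℝ) (x : Fin d → ℝ)
    (hFm : Measurable (F x)) (β M ε : ℝ) (hβ0 : 0 ≤ β) (hε : 0 < ε)
    (Pn : Measure (Fin d → ℝ)) [IsProbabilityMeasure Pn]
    (hPnint : Integrable (F x) Pn) (hPnval : ∫ ξ, F x ξ ∂Pn = M)
    (lip : ∀ ξ₁ ξ₂ : Fin d → ℝ, |F x ξ₁ - F x ξ₂| ≤ β * enorm2 (fun i => ξ₁ i - ξ₂ i))
    (Q : Measure (Fin d → ℝ)) (hQp : IsProbabilityMeasure Q)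
    (hQW : Wcost (fun a b => enorm2 (fun i => a i - b i)) Q Pn ≤ ENNReal.ofReal ε) :
    ∫ ξ, F x ξ ∂Q ≤ M + ε * β := by
  have henorm : Continuous (enorm2 (d := d)) :=
    Real.continuous_sqrt.comp (continuous_finset_sum _ fun i _ => (continuous_apply i).pow 2)
  have hcostc : Continuous (fun z : (Fin d → ℝ) × (Fin d → ℝ) => enorm2 (fun i => z.1 i - z.2 i)) :=
    henorm.comp (continuous_pi fun i => ((continuous_apply i).comp continuous_fst).sub
      ((continuous_apply i).comp continuous_snd))
  have hcost_m : Measurable (fun z : (Fin d → ℝ) × (Fin d → ℝ) => enorm2 (fun i => z.1 i - z.2 i)) :=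
    hcostc.measurable
  have hcost_nn : ∀ z : (Fin d → ℝ) × (Fin d → ℝ), 0 ≤ enorm2 (fun i => z.1 i - z.2 i) :=
    fun z => Real.sqrt_nonneg _
  refine le_of_forall_pos_le_add fun η hη => ?_
  set η' := η / (β + 1) with hη'def
  have hη' : 0 < η' := div_pos hη (by linarith)
  have hlt : Wcost (fun a b => enorm2 (fun i => a i - b i)) Q Pn
      < ENNReal.ofReal ε + ENNReal.ofReal η' :=
    lt_of_le_of_lt hQW (ENNReal.lt_add_right ofReal_ne_top (ofReal_pos.2 hη').ne')
  rw [Wcost] at hlt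
  obtain ⟨π, hπ⟩ := iInf_lt_iff.1 hlt
  obtain ⟨h1, hπ⟩ := iInf_lt_iff.1 hπ
  obtain ⟨h2, hπc⟩ := iInf_lt_iff.1 hπ
  haveI : IsProbabilityMeasure π := by
    constructor
    have : π (Prod.fst ⁻¹' (Set.univ : Set (Fin d → ℝ))) = Q Set.univ := by
      rw [← Measure.map_apply measurable_fst MeasurableSet.univ, h1]
    simpa using this
  set cost : ((Fin d → ℝ) × (Fin d → ℝ)) → ℝ := fun z => enorm2 (fun i => z.1 i - z.2 i) with hcostdef
  have hcost_int : Integrable cost π := by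
    refine ⟨hcost_m.stronglyMeasurable.aestronglyMeasurable, ?_⟩
    rw [HasFiniteIntegral]
    have : ∀ z, ‖cost z‖ₑ = ENNReal.ofReal (cost z) :=
      fun z => Real.enorm_eq_ofReal (hcost_nn z)
    simp only [this]
    exact hπc.trans_le le_top
  have hFsnd : Integrable (fun z : (Fin d → ℝ) × (Fin d → ℝ) => F x z.2) π := by
    have := (integrable_map_measure hFm.stronglyMeasurable.aestronglyMeasurable
      measurable_snd.aemeasurable).mp (h2 ▸ hPnint)
    exact this
  have hdiffm : Measurable (fun z : (Fin d → ℝ) × (Fin d → ℝ) => F x z.1 - F x z.2) :=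
    ((hFm.comp measurable_fst).sub (hFm.comp measurable_snd))
  have hdiffInt : Integrable (fun z : (Fin d → ℝ) × (Fin d → ℝ) => F x z.1 - F x z.2) π := by
    refine Integrable.mono' (hcost_int.const_mul β)
      hdiffm.stronglyMeasurable.aestronglyMeasurable (ae_of_all _ fun z => ?_)
    rw [Real.norm_eq_abs]
    exact lip z.1 z.2
  have hFfst : Integrable (fun z : (Fin d → ℝ) × (Fin d → ℝ) => F x z.1) π := by
    have h := hdiffInt.add hFsnd
    have : ((fun z : (Fin d → ℝ) × (Fin d → ℝ) => F x z.1 - F x z.2) + fun z => F x z.2)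
        = fun z : (Fin d → ℝ) × (Fin d → ℝ) => F x z.1 := by funext z; simp
    rwa [this] at h
  have step1 : ∫ ξ, F x ξ ∂Q = ∫ z, F x z.1 ∂π := by
    rw [← h1, integral_map measurable_fst.aemeasurable
      hFm.stronglyMeasurable.aestronglyMeasurable]
  have step2 : ∫ z, F x z.2 ∂π = M := by
    rw [← hPnval, ← h2, integral_map measurable_snd.aemeasurable
      hFm.stronglyMeasurable.aestronglyMeasurable]
  have step3 : ∫ z, (F x z.1 - F x z.2) ∂π ≤ β * (ε + η') := by
    have hmono : ∫ z, (F x z.1 - F x z.2) ∂π ≤ ∫ z, β * cost z ∂π :=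
      integral_mono hdiffInt (hcost_int.const_mul β)
        (fun z => (le_abs_self _).trans (lip z.1 z.2))
    have heq : ∫ z, β * cost z ∂π = β * ∫ z, cost z ∂π := integral_const_mul β cost
    have hcostval : ∫ z, cost z ∂π ≤ ε + η' := by
      rw [integral_eq_lintegral_of_nonneg_ae (ae_of_all _ hcost_nn)
        hcost_m.stronglyMeasurable.aestronglyMeasurable]
      have := ENNReal.toReal_mono (by finiteness) hπc.le
      rw [ENNReal.toReal_add ofReal_ne_top ofReal_ne_top, ENNReal.toReal_ofReal hε.le,
        ENNReal.toReal_ofReal hη'.le] at this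
      exact this
    calc ∫ z, (F x z.1 - F x z.2) ∂π ≤ β * ∫ z, cost z ∂π := heq ▸ hmono
      _ ≤ β * (ε + η') := mul_le_mul_of_nonneg_left hcostval hβ0
  have hsub := integral_sub hFfst hFsnd
  have hfin : β * η' ≤ η := by
    rw [hη'def]
    rw [mul_div_assoc']
    rw [div_le_iff₀ (by linarith)]
    nlinarith
  calc ∫ ξ, F x ξ ∂Q = ∫ z, F x z.1 ∂π := step1
    _ = ∫ z, (F x z.1 - F x z.2) ∂π + ∫ z, F x z.2 ∂π := by rw [hsub]; ring
    _ ≤ β * (ε + η') + M := by rw [step2]; linarith [step3]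
    _ ≤ M + ε * β + η := by nlinarith


lemma NV.scalar_low (co x s t : ℝ) (hco : 0 < co) (hts : t ≤ s) :
    -(co * |x - t|) ≤ (-co) * (min x s - min x t) := by
  rcases le_total x t with h1 | h1 <;> rcases le_total x s with h2 | h2 <;>
    simp only [min_eq_left, min_eq_right, h1, h2] <;>
    rcases abs_cases (x - t) with ⟨he, _⟩ | ⟨he, _⟩ <;> nlinarith

lemma NV.lower {d n : ℕ} (hn : 0 < n)
    (c v g b : Fin d → ℝ)
    (hvg : ∀ i, g i < v i) (hb : ∀ i, 0 ≤ b i) (hbvg : ∀ i, v i - g i ≤ b i)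
    (F : (Fin d → ℝ) → (Fin d → ℝ) → ℝ)
    (hF : ∀ x ξ, F x ξ = (∑ i, (c i - g i) * x i) + (∑ i, b i * ξ i) +
        ∑ i, (g i - v i - b i) * min (x i) (ξ i))
    (ξhat : Fin n → (Fin d → ℝ)) (hξhat : ∀ j i, 0 ≤ ξhat j i)
    (ε : ℝ) (hε : 0 < ε) (x : Fin d → ℝ)
    (hFm : Measurable (F x))
    (Sset : Set (Fin d → ℝ)) (hSdef : Sset = {ξ : Fin d → ℝ | ∀ i, 0 ≤ ξ i})
    (hSmeas : MeasurableSet Sset)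
    (w : ℝ) (hβpos : 0 < enorm2 b)
    (hw : w < (∑ j, F x (ξhat j)) / n + ε * enorm2 b) :
    ∃ Q : Measure (Fin d → ℝ), IsProbabilityMeasure Q ∧
      Q Ssetᶜ = 0 ∧
      Wcost (fun a b => enorm2 (fun i => a i - b i)) Q (empMeasure ξhat) ≤ ENNReal.ofReal ε ∧
      w < ∫ ξ, F x ξ ∂Q := by
  classical
  set β := enorm2 b with hβdef
  set M := (∑ j, F x (ξhat j)) / n with hMdef
  set Pn := empMeasure ξhat with hPndef
  haveI : IsProbabilityMeasure Pn := NV.isProb_empMeasure _ hn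
  set η := M + ε * β - w with hηdef
  have hηpos : 0 < η := by simpa [hηdef] using sub_pos.2 hw
  set u : Fin d → ℝ := fun i => b i / β with hudef
  have hu0 : ∀ i, 0 ≤ u i := fun i => div_nonneg (hb i) hβpos.le
  have hβsq : β ^ 2 = ∑ i, b i ^ 2 := by
    rw [hβdef, enorm2, Real.sq_sqrt (Finset.sum_nonneg fun i _ => sq_nonneg _)]
  have hsumu : ∑ i, u i ^ 2 = 1 := by
    simp only [hudef, div_pow, ← Finset.sum_div]
    rw [← hβsq]; field_simp
  have hbu : ∑ i, b i * u i = β := by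
    simp only [hudef, mul_div_assoc', ← Finset.sum_div]
    have : ∑ i, b i * b i = β ^ 2 := by rw [hβsq]; exact Finset.sum_congr rfl fun i _ => (sq (b i)) ▸ by ring
    rw [this]; field_simp
  set C := ∑ j, ∑ i, (v i - g i + b i) * |x i - ξhat j i| with hCdef
  have hC0 : 0 ≤ C :=
    Finset.sum_nonneg fun j _ => Finset.sum_nonneg fun i _ =>
      mul_nonneg (by linarith [hvg i, hb i]) (abs_nonneg _)
  have hnR : (0 : ℝ) < n := by exact_mod_cast hn
  set T := max (ε + 1) (ε * C / (n * η) + 1) with hTdef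
  have hTge : ε + 1 ≤ T := le_max_left _ _
  have hTpos : 0 < T := by linarith
  have hTbig : ε * C / n < η * T := by
    have h2 : ε * C / (n * η) + 1 ≤ T := le_max_right _ _
    have h3 : ε * C / (n * η) ≤ T - 1 := by linarith
    have h4 : ε * C ≤ (T - 1) * (↑n * η) := by
      rwa [div_le_iff₀ (by positivity)] at h3
    rw [div_lt_iff₀ hnR]
    nlinarith
  set δ := ε / T with hδdef
  have hδpos : 0 < δ := div_pos hε hTpos
  have hδ1 : δ < 1 := by
    rw [hδdef, div_lt_one hTpos]; linarith
  have hδT : δ * T = ε := div_mul_cancel₀ ε hTpos.ne'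
  set shift : (Fin d → ℝ) → (Fin d → ℝ) := fun ξ i => ξ i + T * u i with hshiftdef
  have hshiftc : Continuous shift :=
    continuous_pi fun i => ((continuous_apply i).add continuous_const)
  have hshiftm : Measurable shift := hshiftc.measurable
  set ζ : Fin n → Fin d → ℝ := fun j => shift (ξhat j) with hζdef
  set Q : Measure (Fin d → ℝ) :=
    ENNReal.ofReal (1 - δ) • Pn + ENNReal.ofReal δ • empMeasure ζ with hQdef
  haveI : IsProbabilityMeasure (empMeasure ζ) := NV.isProb_empMeasure _ hn
  have hofsum : ENNReal.ofReal (1 - δ) + ENNReal.ofReal δ = 1 := by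
    rw [← ENNReal.ofReal_add (by linarith) hδpos.le]
    norm_num
  have hQprob : IsProbabilityMeasure Q := by
    constructor
    rw [hQdef]
    simp only [Measure.add_apply, Measure.smul_apply, smul_eq_mul, measure_univ, mul_one]
    exact hofsum
  have hQsupp : Q Ssetᶜ = 0 := by
    rw [hQdef]
    simp only [Measure.add_apply, Measure.smul_apply, smul_eq_mul]
    rw [NV.empMeasure_compl_eq_zero ξhat hSmeas (fun j => by rw [hSdef]; exact fun i => hξhat j i),
      NV.empMeasure_compl_eq_zero ζ hSmeas (fun j => by
        rw [hSdef]
        intro i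
        have := hξhat j i
        have := hu0 i
        simp only [hζdef, hshiftdef]
        positivity)]
    simp
  -- the coupling
  set π : Measure ((Fin d → ℝ) × (Fin d → ℝ)) :=
    ENNReal.ofReal (1 - δ) • Pn.map (fun ξ => (ξ, ξ)) +
    ENNReal.ofReal δ • Pn.map (fun ξ => (shift ξ, ξ)) with hπdef
  have hdiagm : Measurable (fun ξ : Fin d → ℝ => (ξ, ξ)) := measurable_id.prodMk measurable_id
  have hpairm : Measurable (fun ξ : Fin d → ℝ => (shift ξ, ξ)) := hshiftm.prodMk measurable_id
  have hπ1 : π.map Prod.fst = Q := by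
    rw [hπdef, hQdef, Measure.map_add _ _ measurable_fst, Measure.map_smul, Measure.map_smul,
      Measure.map_map measurable_fst hdiagm, Measure.map_map measurable_fst hpairm]
    have e1 : (Prod.fst ∘ fun ξ : Fin d → ℝ => (ξ, ξ)) = id := rfl
    have e2 : (Prod.fst ∘ fun ξ : Fin d → ℝ => (shift ξ, ξ)) = shift := rfl
    rw [e1, e2, Measure.map_id, hPndef, NV.map_empMeasure ξhat shift hshiftm]
    rfl
  have hπ2 : π.map Prod.snd = Pn := by
    rw [hπdef, Measure.map_add _ _ measurable_snd, Measure.map_smul, Measure.map_smul,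
      Measure.map_map measurable_snd hdiagm, Measure.map_map measurable_snd hpairm]
    have e1 : (Prod.snd ∘ fun ξ : Fin d → ℝ => (ξ, ξ)) = id := rfl
    have e2 : (Prod.snd ∘ fun ξ : Fin d → ℝ => (shift ξ, ξ)) = id := rfl
    rw [e1, e2, Measure.map_id, ← add_smul, hofsum, one_smul]
  have henorm : Continuous (enorm2 (d := d)) :=
    Real.continuous_sqrt.comp (continuous_finset_sum _ fun i _ => (continuous_apply i).pow 2)
  have hcostc : Continuous (fun z : (Fin d → ℝ) × (Fin d → ℝ) => enorm2 (fun i => z.1 i - z.2 i)) :=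
    henorm.comp (continuous_pi fun i => ((continuous_apply i).comp continuous_fst).sub
      ((continuous_apply i).comp continuous_snd))
  have hcost_m : Measurable (fun z : (Fin d → ℝ) × (Fin d → ℝ) =>
      ENNReal.ofReal (enorm2 (fun i => z.1 i - z.2 i))) :=
    ENNReal.measurable_ofReal.comp hcostc.measurable
  have hQW : Wcost (fun a b => enorm2 (fun i => a i - b i)) Q Pn ≤ ENNReal.ofReal ε := by
    refine (NV.Wcost_le _ _ _ π hπ1 hπ2).trans ?_
    rw [hπdef, lintegral_add_measure, lintegral_smul_measure, lintegral_smul_measure,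
      lintegral_map hcost_m hdiagm, lintegral_map hcost_m hpairm]
    have e1 : ∀ ξ : Fin d → ℝ, ENNReal.ofReal (enorm2 (fun i => ξ i - ξ i)) = 0 := by
      intro ξ; simp [enorm2]
    have e2 : ∀ ξ : Fin d → ℝ, ENNReal.ofReal (enorm2 (fun i => shift ξ i - ξ i))
        = ENNReal.ofReal T := by
      intro ξ
      congr 1
      have : (fun i => shift ξ i - ξ i) = fun i => T * u i := by
        funext i; simp [hshiftdef]
      rw [this, enorm2]
      have : ∑ i, (T * u i) ^ 2 = T ^ 2 := by
        simp only [mul_pow, ← Finset.mul_sum, hsumu, mul_one]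
      rw [this, Real.sqrt_sq hTpos.le]
    simp only [e1, e2, lintegral_zero, lintegral_const, measure_univ, mul_one, mul_zero, zero_add]
    rw [smul_eq_mul, smul_eq_mul, mul_zero, zero_add, ← ENNReal.ofReal_mul hδpos.le, hδT]
  -- value
  have hFζm : ∀ m : Fin n → Fin d → ℝ, Integrable (F x) (empMeasure m) :=
    fun m => NV.integrable_empMeasure m _ hFm
  have hval : ∫ ξ, F x ξ ∂Q = (1 - δ) * M + δ * ((∑ j, F x (ζ j)) / n) := by
    rw [hQdef, integral_add_measure ((hFζm ξhat).smul_measure ofReal_ne_top)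
      ((hFζm ζ).smul_measure ofReal_ne_top), integral_smul_measure, integral_smul_measure,
      ENNReal.toReal_ofReal (by linarith), ENNReal.toReal_ofReal hδpos.le,
      NV.integral_empMeasure ξhat hn _ hFm, NV.integral_empMeasure ζ hn _ hFm]
    simp [hMdef, smul_eq_mul]
  have hptbound : ∀ j, F x (ξhat j) + T * β - ∑ i, (v i - g i + b i) * |x i - ξhat j i|
      ≤ F x (ζ j) := by
    intro j
    have hexp : F x (ζ j) - F x (ξhat j) =
        (∑ i, b i * (T * u i)) +
        ∑ i, (g i - v i - b i) * (min (x i) (ζ j i) - min (x i) (ξhat j i)) := by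
      rw [hF, hF]
      have : ∀ i, ζ j i = ξhat j i + T * u i := fun i => rfl
      simp only [this, Finset.sum_add_distrib, mul_add, Finset.mul_sum,
        Finset.sum_sub_distrib, mul_sub]
      ring
    have hsum1 : ∑ i, b i * (T * u i) = T * β := by
      simp only [show ∀ i, b i * (T * u i) = T * (b i * u i) from fun i => by ring,
        ← Finset.mul_sum, hbu]
    have hsum2 : ∀ i, -((v i - g i + b i) * |x i - ξhat j i|) ≤
        (g i - v i - b i) * (min (x i) (ζ j i) - min (x i) (ξhat j i)) := by
      intro i
      have h := NV.scalar_low (v i - g i + b i) (x i) (ζ j i) (ξhat j i)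
        (by linarith [hvg i, hb i])
        (by simp only [hζdef, hshiftdef]; nlinarith [hu0 i, hTpos])
      calc -((v i - g i + b i) * |x i - ξhat j i|)
          ≤ (-(v i - g i + b i)) * (min (x i) (ζ j i) - min (x i) (ξhat j i)) := h
        _ = (g i - v i - b i) * (min (x i) (ζ j i) - min (x i) (ξhat j i)) := by ring
    have : -(∑ i, (v i - g i + b i) * |x i - ξhat j i|) ≤
        ∑ i, (g i - v i - b i) * (min (x i) (ζ j i) - min (x i) (ξhat j i)) := by
      rw [← Finset.sum_neg_distrib]
      exact Finset.sum_le_sum fun i _ => hsum2 i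
    rw [hsum1] at hexp
    linarith [this]
  have havg : M + T * β - C / n ≤ (∑ j, F x (ζ j)) / n := by
    have hsumle : ∑ j, (F x (ξhat j) + T * β - ∑ i, (v i - g i + b i) * |x i - ξhat j i|)
        ≤ ∑ j, F x (ζ j) := Finset.sum_le_sum fun j _ => hptbound j
    have hlhs : M + T * β - C / n =
        (∑ j, (F x (ξhat j) + T * β - ∑ i, (v i - g i + b i) * |x i - ξhat j i|)) / n := by
      rw [hMdef, hCdef]
      rw [Finset.sum_sub_distrib, Finset.sum_add_distrib, Finset.sum_const, Finset.card_univ,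
        Fintype.card_fin, nsmul_eq_mul]
      field_simp
    rw [hlhs]
    exact div_le_div_of_nonneg_right hsumle hnR.le
  refine ⟨Q, hQprob, hQsupp, hQW, ?_⟩
  rw [hval]
  have hδC : δ * (C / n) < η := by
    have heq : δ * (C / n) = (ε * C / n) / T := by rw [hδdef]; ring
    rw [heq, div_lt_iff₀ hTpos]
    exact hTbig
  have hmul : δ * (M + T * β - C / n) ≤ δ * ((∑ j, F x (ζ j)) / n) :=
    mul_le_mul_of_nonneg_left havg hδpos.le
  have hexpand : δ * (M + T * β - C / n) = δ * M + ε * β - δ * (C / n) := by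
    rw [← hδT]; ring
  have hone : (1 - δ) * M = M - δ * M := by ring
  linarith [hmul, hexpand, hδC, hone, hηpos]


/-- The newsvendor cost is `‖b‖₂`-Lipschitz in `ξ` on `ℝ₊ᵈ`; consequently the 1-Wasserstein
DRO objective equals the SAA objective plus the constant `ε‖b‖₂`, and 1-WDRO has the same
minimizers over `𝒳 = {x : 0 ≤ x ≤ a}` as SAA. -/
theorem newsvendor_1WDRO_eq_SAA {d n : ℕ} (hn : 0 < n)
    (c v g b a : Fin d → ℝ)
    (hvg : ∀ i, g i < v i) (hb : ∀ i, 0 ≤ b i) (hbvg : ∀ i, v i - g i ≤ b i)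
    (F : (Fin d → ℝ) → (Fin d → ℝ) → ℝ)
    (hF : ∀ x ξ, F x ξ = (∑ i, (c i - g i) * x i) + (∑ i, b i * ξ i) +
        ∑ i, (g i - v i - b i) * min (x i) (ξ i))
    (ξhat : Fin n → (Fin d → ℝ)) (hξhat : ∀ j i, 0 ≤ ξhat j i)
    (ε : ℝ) (hε : 0 < ε) :
    (∀ x ξ₁ ξ₂ : Fin d → ℝ, (∀ i, 0 ≤ ξ₁ i) → (∀ i, 0 ≤ ξ₂ i) →
        |F x ξ₁ - F x ξ₂| ≤ enorm2 b * enorm2 (fun i => ξ₁ i - ξ₂ i)) ∧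
    (∀ x : Fin d → ℝ,
        droObj F ξhat ε x = (∑ j, F x (ξhat j)) / n + ε * enorm2 b) ∧
    (∀ xstar : Fin d → ℝ, (∀ i, 0 ≤ xstar i ∧ xstar i ≤ a i) →
      ((∀ x : Fin d → ℝ, (∀ i, 0 ≤ x i ∧ x i ≤ a i) →
          droObj F ξhat ε xstar ≤ droObj F ξhat ε x) ↔
       (∀ x : Fin d → ℝ, (∀ i, 0 ≤ x i ∧ x i ≤ a i) →
          (∑ j, F xstar (ξhat j)) / n ≤ (∑ j, F x (ξhat j)) / n))) := by
  have lip : ∀ x ξ₁ ξ₂ : Fin d → ℝ,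
      |F x ξ₁ - F x ξ₂| ≤ enorm2 b * enorm2 (fun i => ξ₁ i - ξ₂ i) :=
    NV.lipF c v g b hvg hb hbvg F hF
  have main : ∀ x : Fin d → ℝ,
      droObj F ξhat ε x = (∑ j, F x (ξhat j)) / n + ε * enorm2 b := by
    intro x
    have hFc : Continuous (F x) := by
      have hfx : F x = fun ξ => (∑ i, (c i - g i) * x i) + (∑ i, b i * ξ i) +
          ∑ i, (g i - v i - b i) * min (x i) (ξ i) := funext (hF x)
      rw [hfx]
      exact ((continuous_const.add (continuous_finset_sum _ fun i _ =>
        continuous_const.mul (continuous_apply i))).add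
        (continuous_finset_sum _ fun i _ =>
        continuous_const.mul (continuous_const.min (continuous_apply i))))
    have hFm : Measurable (F x) := hFc.measurable
    set β := enorm2 b with hβdef
    set M := (∑ j, F x (ξhat j)) / n with hMdef
    set Pn := empMeasure ξhat with hPndef
    haveI : IsProbabilityMeasure Pn := NV.isProb_empMeasure ξhat hn
    have hSmeas : MeasurableSet {ξ : Fin d → ℝ | ∀ i, 0 ≤ ξ i} := by
      have : {ξ : Fin d → ℝ | ∀ i, 0 ≤ ξ i} = ⋂ i, {ξ : Fin d → ℝ | 0 ≤ ξ i} := by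
        ext ξ; simp [Set.mem_iInter]
      rw [this]
      exact MeasurableSet.iInter fun i =>
        measurableSet_le measurable_const (measurable_pi_apply i)
    have hPn_supp : Pn {ξ : Fin d → ℝ | ∀ i, 0 ≤ ξ i}ᶜ = 0 :=
      NV.empMeasure_compl_eq_zero ξhat hSmeas (fun j i => hξhat j i)
    have hdiagm : Measurable (fun ξ : Fin d → ℝ => (ξ, ξ)) :=
      measurable_id.prodMk measurable_id
    have henorm : Continuous (enorm2 (d := d)) :=
      Real.continuous_sqrt.comp (continuous_finset_sum _ fun i _ => (continuous_apply i).pow 2)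
    have hcostc : Continuous
        (fun z : (Fin d → ℝ) × (Fin d → ℝ) => enorm2 (fun i => z.1 i - z.2 i)) :=
      henorm.comp (continuous_pi fun i => ((continuous_apply i).comp continuous_fst).sub
        ((continuous_apply i).comp continuous_snd))
    have hcost_m : Measurable (fun z : (Fin d → ℝ) × (Fin d → ℝ) =>
        ENNReal.ofReal (enorm2 (fun i => z.1 i - z.2 i))) :=
      ENNReal.measurable_ofReal.comp hcostc.measurable
    have hWPn : Wcost (fun p q => enorm2 (fun i => p i - q i)) Pn Pn ≤ ENNReal.ofReal ε := by
      refine (NV.Wcost_le _ _ _ (Pn.map (fun ξ => (ξ, ξ))) ?_ ?_).trans ?_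
      · rw [Measure.map_map measurable_fst hdiagm,
          show (Prod.fst ∘ fun ξ : Fin d → ℝ => (ξ, ξ)) = id from rfl, Measure.map_id]
      · rw [Measure.map_map measurable_snd hdiagm,
          show (Prod.snd ∘ fun ξ : Fin d → ℝ => (ξ, ξ)) = id from rfl, Measure.map_id]
      · rw [lintegral_map hcost_m hdiagm]
        have : ∀ ξ : Fin d → ℝ, ENNReal.ofReal (enorm2 (fun i => ξ i - ξ i)) = 0 := by
          intro ξ; simp [enorm2]
        simp only [this, lintegral_zero]
        exact zero_le
    have hMmem : M ∈ {r : ℝ | ∃ Q : Measure (Fin d → ℝ), IsProbabilityMeasure Q ∧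
        Q {ξ | ∀ i, 0 ≤ ξ i}ᶜ = 0 ∧
        Wcost (fun p q => enorm2 (fun i => p i - q i)) Q (empMeasure ξhat)
          ≤ ENNReal.ofReal ε ∧
        r = ∫ ξ, F x ξ ∂Q} :=
      ⟨Pn, inferInstance, hPn_supp, hWPn,
        (NV.integral_empMeasure ξhat hn _ hFm).symm⟩
    show sSup _ = M + ε * β
    apply csSup_eq_of_forall_le_of_forall_lt_exists_gt ⟨M, hMmem⟩
    · rintro r ⟨Q, hQp, -, hQW, rfl⟩
      exact NV.upper F x hFm β M ε (NV.enorm2_nonneg b) hε Pn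
        (NV.integrable_empMeasure ξhat _ hFm) (NV.integral_empMeasure ξhat hn _ hFm)
        (fun ξ₁ ξ₂ => lip x ξ₁ ξ₂) Q hQp hQW
    · intro w hw
      by_cases hβ : enorm2 b = 0
      · refine ⟨M, hMmem, ?_⟩
        rw [hβdef, hβ, mul_zero, add_zero] at hw
        exact hw
      · obtain ⟨Q, h1, h2, h3, h4⟩ := NV.lower hn c v g b hvg hb hbvg F hF ξhat hξhat ε hε x hFm
          {ξ : Fin d → ℝ | ∀ i, 0 ≤ ξ i} rfl hSmeas w
          (lt_of_le_of_ne (NV.enorm2_nonneg b) (Ne.symm hβ)) hw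
        exact ⟨_, ⟨Q, h1, h2, h3, rfl⟩, h4⟩
  refine ⟨fun x ξ₁ ξ₂ _ _ => lip x ξ₁ ξ₂, main, ?_⟩
  intro xstar _
  constructor
  · intro h x hx
    have := h x hx
    rw [main xstar, main x] at this
    linarith
  · intro h x hx
    rw [main xstar, main x]
    linarith [h x hx]
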